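/- Let b1, ..., bk be the s-t bridges of G in their common order along s-t paths, and define R_i as the set of vertices reachable from s in G \ b_i. Then R_1 ⊆ R_2 ⊆ ... ⊆ R_k. -/

import Mathlib

variable {V : Type*}

/-- Reachability via directed edges of relation `E`. -/
def reaches (E : V → V → Prop) : V → V → Prop := Relation.ReflTransGen E

/-- The graph with the single edge `e` deleted. -/
def eraseEdge (E : V → V → Prop) (e : V × V) : V → V → Prop :=
  fun a b => E a b ∧ (a, b) ≠ e

/-- `e` is an `s`-`t` bridge: it is an edge and its removal destroys all `s`-`t` paths. -/
def IsBridge (E : V → V → Prop) (s t : V) (e : V × V) : Prop :=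
  E e.1 e.2 ∧ ¬ reaches (eraseEdge E e) s t

/-- A directed walk from `s` to `t` whose successive vertices after `s` are `p`. -/
def IsWalk (E : V → V → Prop) (s t : V) (p : List V) : Prop :=
  List.Chain E s p ∧ (s :: p).getLast (List.cons_ne_nil s p) = t

/-- The list of edges of the walk `s :: p`. -/
def edgesOf (s : V) (p : List V) : List (V × V) := (s :: p).zip p

lemma edgesOf_nil (s : V) : edgesOf s [] = [] := rfl

lemma edgesOf_cons (s a : V) (p : List V) :
    edgesOf s (a :: p) = (s, a) :: edgesOf a p := rfl

lemma edgesOf_append (s : V) (p q : List V) :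
    edgesOf s (p ++ q) =
      edgesOf s p ++ edgesOf ((s :: p).getLast (List.cons_ne_nil s p)) q := by
  induction p generalizing s with
  | nil => rfl
  | cons a p ih =>
      rw [List.cons_append, edgesOf_cons, edgesOf_cons, ih a, List.getLast_cons_cons,
        List.cons_append]

lemma chain_append {E : V → V → Prop} {s : V} {p q : List V}
    (hp : List.Chain E s p)
    (hq : List.Chain E ((s :: p).getLast (List.cons_ne_nil s p)) q) :
    List.Chain E s (p ++ q) := by
  induction p generalizing s with
  | nil => exact hq
  | cons a p ih =>
      rw [List.getLast_cons_cons] at hq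
      obtain ⟨hsa, hp⟩ := List.isChain_cons_cons.mp hp
      exact List.Chain.cons hsa (ih hp hq)

lemma edges_prop {E : V → V → Prop} {s : V} {p : List V}
    (hp : List.Chain E s p) : ∀ e ∈ edgesOf s p, E e.1 e.2 := by
  induction p generalizing s with
  | nil => intro e he; simp [edgesOf_nil] at he
  | cons a p ih =>
      obtain ⟨hsa, hp⟩ := List.isChain_cons_cons.mp hp
      intro e he
      rw [edgesOf_cons, List.mem_cons] at he
      rcases he with he | he
      · simpa [he] using hsa
      · exact ih hp e he

/-- Split a walk after the last occurrence of edge `e`. -/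
lemma split_last {E : V → V → Prop} {s : V} {p : List V} {e : V × V}
    (hp : List.Chain E s p) (he : e ∈ edgesOf s p) :
    ∃ q : List V, List.Chain E e.2 q ∧
      (e.2 :: q).getLast (List.cons_ne_nil e.2 q) =
        (s :: p).getLast (List.cons_ne_nil s p) ∧
      e ∉ edgesOf e.2 q := by
  revert he
  induction p generalizing s with
  | nil => intro he; simp [edgesOf_nil] at he
  | cons a p ih =>
      intro he
      obtain ⟨hsa, hp⟩ := List.isChain_cons_cons.mp hp
      rw [edgesOf_cons, List.mem_cons] at he
      by_cases h : e ∈ edgesOf a p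
      · obtain ⟨q, hq1, hq2, hq3⟩ := ih hp h
        exact ⟨q, hq1, by rw [hq2, List.getLast_cons_cons], hq3⟩
      · have heq : e = (s, a) := by
          rcases he with he | he
          · exact he
          · exact absurd he h
        subst heq
        exact ⟨p, hp, by rw [List.getLast_cons_cons], h⟩

lemma pair_sublist {α : Type*} :
    ∀ (l : List α) (i j : ℕ) (hij : i < j) (hj : j < l.length),
      [l.get ⟨i, hij.trans hj⟩, l.get ⟨j, hj⟩].Sublist l := by
  intro l
  induction l with
  | nil => intro i j hij hj; simp at hj
  | cons a l ih =>
      intro i j hij hj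
      cases i with
      | zero =>
          cases j with
          | zero => omega
          | succ j =>
              refine List.Sublist.cons₂ a ?_
              simpa using List.get_mem l j (by simp at hj; omega)
      | succ i =>
          cases j with
          | zero => omega
          | succ j =>
              exact List.Sublist.cons a (ih i j (by omega) (by simpa using hj))

/-- with the bridges b1,...,bk listed in their common order along
every s-t path, the reachable sets R_i = reach(s, G \ b_i) are nested increasingly. -/
theorem stmt14 (E : V → V → Prop) (s t : V) (hst : reaches E s t)
    (B : List (V × V)) (hnd : B.Nodup)
    (hB : ∀ e : V × V, IsBridge E s t e ↔ e ∈ B)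
    (horder : ∀ p : List V, IsWalk E s t p → B.Sublist (edgesOf s p)) :
    ∀ i j : ℕ, (hij : i ≤ j) → (hj : j < B.length) →
      ∀ v : V, reaches (eraseEdge E (B.get ⟨i, lt_of_le_of_lt hij hj⟩)) s v →
        reaches (eraseEdge E (B.get ⟨j, hj⟩)) s v := by
  intro i j hij hj v hv
  rcases eq_or_lt_of_le hij with heq | hlt
  · subst heq
    exact hv
  set bi := B.get ⟨i, lt_of_le_of_lt hij hj⟩ with hbi_def
  set bj := B.get ⟨j, hj⟩ with hbj_def
  have hne : bi ≠ bj := by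
    intro h
    have := (hnd.get_inj_iff.mp h)
    simp only [Fin.mk.injEq] at this
    omega
  have hpairB : [bi, bj].Sublist B := by
    have := pair_sublist B i j hlt hj
    exact this
  have hEbj : E bj.1 bj.2 := ((hB bj).mpr (List.get_mem B ⟨j, hj⟩)).1
  -- the doubly-erased edge relation
  set E2 : V → V → Prop := fun a b => E a b ∧ (a, b) ≠ bi ∧ (a, b) ≠ bj with hE2_def
  -- key claim: s cannot reach bj.1 in E2
  have key : ¬ Relation.ReflTransGen E2 s bj.1 := by
    intro h
    obtain ⟨p, hp, hplast⟩ := List.exists_isChain_cons_of_relationReflTransGen h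
    obtain ⟨P, hP, hPlast⟩ := List.exists_isChain_cons_of_relationReflTransGen hst
    have hsubP := horder P ⟨hP, hPlast⟩
    have hbjP : bj ∈ edgesOf s P := hsubP.subset (List.get_mem B ⟨j, hj⟩)
    obtain ⟨q, hq, hqlast, hbjq⟩ := split_last hP hbjP
    -- build the combined walk
    have hpE : List.Chain E s p := hp.imp (fun a b hab => hab.1)
    have hQchain : List.Chain E s (p ++ (bj.2 :: q)) := by
      refine chain_append hpE ?_
      rw [hplast]
      exact List.Chain.cons hEbj hq
    have hQlast : ((s :: (p ++ (bj.2 :: q)))).getLast (List.cons_ne_nil _ _) = t := by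
      have : (s :: (p ++ (bj.2 :: q))) = (s :: p) ++ (bj.2 :: q) := by simp
      rw [List.getLast_congr _ (by simp) this, List.getLast_append_of_ne_nil _ (List.cons_ne_nil _ _)]
      rw [hqlast, hPlast]
    have hsubQ := horder (p ++ (bj.2 :: q)) ⟨hQchain, hQlast⟩
    rw [edgesOf_append, hplast, edgesOf_cons] at hsubQ
    have hbj_eta : (bj.1, bj.2) = bj := rfl
    rw [hbj_eta] at hsubQ
    have hpair : [bi, bj].Sublist (edgesOf s p ++ (bj :: edgesOf bj.2 q)) :=
      hpairB.trans hsubQ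
    -- edges of p avoid bi and bj
    have hp_avoid : ∀ e ∈ edgesOf s p, e ≠ bi ∧ e ≠ bj := by
      intro e he
      have := edges_prop hp e he
      exact ⟨this.2.1, this.2.2⟩
    rw [List.sublist_append_iff] at hpair
    obtain ⟨x, y, hxy, hx, hy⟩ := hpair
    rcases x with _ | ⟨x1, xs⟩
    · -- x = [], so y = [bi, bj] and [bi,bj] <+ bj :: edgesOf bj.2 q
      rw [List.nil_append] at hxy
      subst hxy
      rw [List.sublist_cons_iff] at hy
      rcases hy with hy | ⟨r, hr, hrL⟩
      · exact hbjq (hy.subset (by simp))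
      · injection hr with h1 _
        exact hne h1
    · -- x nonempty: its head is bi, which lies in edgesOf s p
      rw [List.cons_append] at hxy
      injection hxy with h1 _
      have hmem : bi ∈ edgesOf s p := hx.subset (h1 ▸ (List.mem_cons_self : x1 ∈ x1 :: xs))
      exact (hp_avoid bi hmem).1 rfl
  -- strengthen the hypothesis walk to avoid bj as well
  have hv' : Relation.ReflTransGen (eraseEdge E bi) s v := hv
  clear hv
  have h2 : Relation.ReflTransGen E2 s v := by
    induction hv' with
    | refl => exact Relation.ReflTransGen.refl
    | tail hsteps hstep ih =>
        rename_i u w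
        refine ih.tail ⟨hstep.1, hstep.2, ?_⟩
        intro hbj
        apply key
        rw [← hbj]
        exact ih
  exact Relation.ReflTransGen.mono (fun a b (hab : E2 a b) => (⟨hab.1, hab.2.2⟩ : eraseEdge E bj a b)) s v h2
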